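/- Let J ⊆ I be monomial ideals in R = K[x_1,...,x_n] over a field K. If there exists t ≥ 1 with J ∩ I^t ≠ J·I^{t-1}, then the least such t satisfies indeg(VV_{J⊆I}) ≤ min{ t_0(J), AR(J,I) }. -/

import Mathlib

open MvPolynomial Pointwise

/-- `t`-fold sumset of `S`. -/
def VVsumSet {n : ℕ} (S : Set (Fin n →₀ ℕ)) : ℕ → Set (Fin n →₀ ℕ)
  | 0 => {0}
  | t+1 => S + VVsumSet S t

lemma VV_deg_lt {n : ℕ} {γ' γ : Fin n →₀ ℕ} (h : ∀ x, γ' x ≤ γ x) (x₀ : Fin n)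
    (hx : γ' x₀ < γ x₀) : (γ'.sum fun _ e => e) < γ.sum fun _ e => e := by
  classical
  have hs' : (γ'.sum fun _ e => e) = ∑ x ∈ γ.support ∪ γ'.support, γ' x :=
    Finsupp.sum_of_support_subset _ Finset.subset_union_right _ (fun _ _ => rfl)
  have hs : (γ.sum fun _ e => e) = ∑ x ∈ γ.support ∪ γ'.support, γ x :=
    Finsupp.sum_of_support_subset _ Finset.subset_union_left _ (fun _ _ => rfl)
  rw [hs, hs']
  refine Finset.sum_lt_sum (fun i _ => h i) ⟨x₀, ?_, hx⟩
  exact Finset.mem_union_left _ (Finsupp.mem_support_iff.mpr (by omega))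

lemma VV_select {n : ℕ} {S : Set (Fin n →₀ ℕ)} :
    ∀ (t : ℕ) (γ α q : Fin n →₀ ℕ), q ∈ VVsumSet S t → (∀ x, γ x ≤ α x) →
      (∀ x, q x ≤ α x) → (γ.sum fun _ e => e) < t →
      ∃ β ∈ S, ∃ r ∈ VVsumSet S (t-1), β + r = q ∧ ∀ x, γ x + β x ≤ α x := by
  intro t
  induction t with
  | zero => intro γ α q _ _ _ hd; exact absurd hd (Nat.not_lt_zero _)
  | succ t ih =>
    intro γ α q hq hγα hqα hd
    rw [show t + 1 - 1 = t from rfl]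
    obtain ⟨β₀, hβ₀, r₀, hr₀, hsum⟩ := Set.mem_add.mp hq
    by_cases hcase : ∀ x, γ x + β₀ x ≤ α x
    · exact ⟨β₀, hβ₀, r₀, hr₀, hsum, hcase⟩
    · push_neg at hcase
      obtain ⟨x₀, hx₀⟩ := hcase
      have hα'app : ∀ x, (α - β₀) x = α x - β₀ x := fun x => Finsupp.tsub_apply _ _ _
      have hγ'app : ∀ x, (γ - (γ - (α - β₀))) x = γ x - (γ x - (α x - β₀ x)) := by
        intro x
        rw [Finsupp.tsub_apply, Finsupp.tsub_apply, hα'app x]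
      have hβ₀le : ∀ x, β₀ x ≤ α x := by
        intro x
        have := hqα x
        rw [← hsum, Finsupp.add_apply] at this
        omega
      have hq0 : ∀ x, β₀ x + r₀ x = q x := by
        intro x; rw [← hsum, Finsupp.add_apply]
      -- degree drop
      have hlt : (γ - (γ - (α - β₀))) x₀ < γ x₀ := by
        have := hβ₀le x₀; rw [hγ'app x₀]; omega
      have hdle : (γ.sum fun _ e => e) ≤ t := Nat.lt_succ_iff.mp hd
      have hd' : ((γ - (γ - (α - β₀))).sum fun _ e => e) < t :=
        lt_of_lt_of_le (VV_deg_lt (fun x => by rw [hγ'app x]; omega) x₀ hlt) hdle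
      obtain ⟨β, hβ, r, hr, hbr, hfin⟩ := ih (γ - (γ - (α - β₀))) (α - β₀) r₀ hr₀
        (fun x => by rw [hγ'app x, hα'app x]; omega)
        (fun x => by rw [hα'app x]; have := hqα x; have := hq0 x; omega) hd'
      obtain ⟨m, rfl⟩ : ∃ m, t = m + 1 := ⟨t - 1, by omega⟩
      refine ⟨β, hβ, β₀ + r, Set.add_mem_add hβ₀ hr, ?_, ?_⟩
      · rw [← hsum, ← hbr, add_left_comm]
      · intro x
        have h1 := hfin x
        rw [hγ'app x, hα'app x] at h1
        have := hβ₀le x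
        have := hγα x
        omega

lemma VV_image_add {K : Type} [Field K] {n : ℕ} (A B : Set (Fin n →₀ ℕ)) :
    (fun a => monomial a (1 : K)) '' (A + B) =
      ((fun a => monomial a (1 : K)) '' A) * ((fun a => monomial a (1 : K)) '' B) := by
  ext z
  simp only [Set.mem_image, Set.mem_mul, Set.mem_add]
  constructor
  · rintro ⟨c, ⟨a, ha, b, hb, rfl⟩, rfl⟩
    exact ⟨monomial a 1, ⟨a, ha, rfl⟩, monomial b 1, ⟨b, hb, rfl⟩,
      by rw [monomial_mul, one_mul]⟩
  · rintro ⟨x, ⟨a, ha, rfl⟩, y, ⟨b, hb, rfl⟩, rfl⟩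
    exact ⟨a + b, ⟨a, ha, b, hb, rfl⟩, by rw [monomial_mul, one_mul]⟩

lemma VV_span_pow {K : Type} [Field K] {n : ℕ} (S : Set (Fin n →₀ ℕ)) (t : ℕ) :
    (Ideal.span ((fun a => monomial a (1 : K)) '' S)) ^ t =
      Ideal.span ((fun a => monomial a (1 : K)) '' VVsumSet S t) := by
  induction t with
  | zero =>
    rw [pow_zero, VVsumSet, Set.image_singleton]
    rw [show (monomial (0 : Fin n →₀ ℕ) (1 : K)) = 1 from rfl]
    rw [Ideal.span_singleton_one, Ideal.one_eq_top]
  | succ t ih =>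
    rw [pow_succ, ih, VVsumSet, Ideal.span_mul_span', ← VV_image_add, add_comm]

lemma VV_key {K : Type} [Field K] {n : ℕ} {J I : Ideal (MvPolynomial (Fin n) K)}
    {S : Set (Fin n →₀ ℕ)} (hI : I = Ideal.span ((fun a => monomial a (1 : K)) '' S))
    {G : Finset (Fin n →₀ ℕ)} (hJ : J = Ideal.span ((fun a => monomial a (1 : K)) '' ↑G))
    {t : ℕ} (ht2 : 2 ≤ t) (ht0 : ∀ γ ∈ G, (γ.sum fun _ e => e) < t)
    (hprev : J ⊓ I ^ (t - 1) = J * I ^ (t - 2)) :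
    J ⊓ I ^ t ≤ J * I ^ (t - 1) := by
  classical
  have htarget : ∀ s : ℕ, J * I ^ s = Ideal.span
      ((fun a => monomial a (1 : K)) '' ((↑G : Set (Fin n →₀ ℕ)) + VVsumSet S s)) := by
    intro s
    rw [hI, hJ, VV_span_pow, Ideal.span_mul_span', ← VV_image_add]
  intro p hp
  obtain ⟨hpJ, hpI⟩ := hp
  rw [hI, VV_span_pow] at hpI
  rw [hJ] at hpJ
  rw [htarget, mem_ideal_span_monomial_image]
  intro α hα
  obtain ⟨γ, hγG, hγα⟩ := mem_ideal_span_monomial_image.mp hpJ α hα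
  obtain ⟨q, hq, hqα⟩ := mem_ideal_span_monomial_image.mp hpI α hα
  obtain ⟨β, hβ, r, hr, hbr, hfin⟩ := VV_select t γ α q hq
    (Finsupp.le_def.mp hγα) (Finsupp.le_def.mp hqα) (ht0 γ (by exact_mod_cast hγG))
  have hqpt : ∀ x, β x + r x = q x := fun x => by rw [← hbr, Finsupp.add_apply]
  have hmem : monomial (α - β) (1 : K) ∈ J ⊓ I ^ (t - 1) := by
    have hsupp : (monomial (α - β) (1 : K)).support = {α - β} := by
      rw [support_monomial, if_neg one_ne_zero]
    refine Submodule.mem_inf.mpr ⟨?_, ?_⟩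
    · rw [hJ, mem_ideal_span_monomial_image]
      intro xi hxi
      rw [hsupp, Finset.mem_singleton] at hxi
      subst hxi
      exact ⟨γ, hγG, Finsupp.le_def.mpr fun x => by
        rw [Finsupp.tsub_apply]; have := hfin x; omega⟩
    · rw [hI, VV_span_pow, mem_ideal_span_monomial_image]
      intro xi hxi
      rw [hsupp, Finset.mem_singleton] at hxi
      subst hxi
      exact ⟨r, hr, Finsupp.le_def.mpr fun x => by
        rw [Finsupp.tsub_apply]
        have := hqpt x
        have := Finsupp.le_def.mp hqα x
        omega⟩
  rw [hprev, htarget, mem_ideal_span_monomial_image] at hmem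
  obtain ⟨δ, hδ, hδle⟩ := hmem (α - β) (by
    rw [support_monomial, if_neg one_ne_zero]; exact Finset.mem_singleton_self _)
  obtain ⟨γ', hγ', r', hr', rfl⟩ := Set.mem_add.mp hδ
  refine ⟨γ' + (β + r'), Set.add_mem_add hγ' ?_, ?_⟩
  · rw [show t - 1 = (t - 2) + 1 by omega, VVsumSet]
    exact Set.add_mem_add hβ hr'
  · refine Finsupp.le_def.mpr fun x => ?_
    have h1 := Finsupp.le_def.mp hδle x
    rw [Finsupp.add_apply, Finsupp.tsub_apply] at h1
    have h2 : β x ≤ α x := by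
      have := hqpt x; have := Finsupp.le_def.mp hqα x; omega
    rw [Finsupp.add_apply, Finsupp.add_apply]
    omega

/-- Let `J ⊆ I` be monomial ideals in `K[x_1,…,x_n]`.  Here `G` is the
(unique) minimal monomial generating set of `J` (minimality is expressed by saying that no
member of `G` lies in the ideal spanned by the other members), and `I` is a monomial ideal
containing `J`.  If the Valabrega–Valla module is nonzero, i.e. there is `t ≥ 1` with
`J ∩ I^t ≠ J·I^{t-1}`, then its initial degree (the least such `t`) is at most
`min (t₀(J)) (AR(J,I))`, where `t₀(J)` is the maximal total degree of a minimal generator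
of `J` and `AR(J,I)` is the Artin–Rees number. -/
theorem indeg_VV_le_min_t0_AR {K : Type} [Field K] {n : ℕ}
    (J I : Ideal (MvPolynomial (Fin n) K))
    (S : Set (Fin n →₀ ℕ))
    (hI : I = Ideal.span ((fun a => MvPolynomial.monomial a (1 : K)) '' S))
    (G : Finset (Fin n →₀ ℕ))
    (hJ : J = Ideal.span ((fun a => MvPolynomial.monomial a (1 : K)) '' ↑G))
    (hmin : ∀ a ∈ G, MvPolynomial.monomial a (1 : K) ∉
      Ideal.span ((fun b => MvPolynomial.monomial b (1 : K)) '' ↑(G.erase a)))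
    (hJI : J ≤ I)
    (hne : ∃ t : ℕ, 1 ≤ t ∧ J ⊓ I ^ t ≠ J * I ^ (t - 1)) :
    sInf {t : ℕ | 1 ≤ t ∧ J ⊓ I ^ t ≠ J * I ^ (t - 1)} ≤
      min (G.sup fun a => a.sum fun _ e => e)
        (sInf {k : ℕ | ∀ t ≥ k, J ⊓ I ^ t = (J ⊓ I ^ k) * I ^ (t - k)}) := by
  set VV : Set ℕ := {t : ℕ | 1 ≤ t ∧ J ⊓ I ^ t ≠ J * I ^ (t - 1)} with hVV
  have hne' : VV.Nonempty := hne
  set T := sInf VV with hT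
  obtain ⟨hT1, hTne⟩ : 1 ≤ T ∧ J ⊓ I ^ T ≠ J * I ^ (T - 1) := Nat.sInf_mem hne'
  have step3 : ∀ s : ℕ, 1 ≤ s → J * I ^ (s - 1) ≤ J ⊓ I ^ s := by
    intro s hs
    refine le_inf Ideal.mul_le_left ?_
    calc J * I ^ (s - 1) ≤ I * I ^ (s - 1) := Ideal.mul_mono_left hJI
      _ = I ^ (s - 1 + 1) := (pow_succ' I (s - 1)).symm
      _ = I ^ s := by rw [Nat.sub_add_cancel hs]
  have hone : (1 : ℕ) ∉ VV := by
    intro h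
    exact h.2 (by rw [pow_one, Nat.sub_self, pow_zero, mul_one, inf_eq_left.mpr hJI])
  have hT2 : 2 ≤ T := by
    have hT1' : T ≠ 1 := fun h => hone (h ▸ Nat.sInf_mem hne')
    omega
  refine le_min ?_ ?_
  · -- bound by t₀
    by_contra hcon
    push_neg at hcon
    have hprev : J ⊓ I ^ (T - 1) = J * I ^ (T - 2) := by
      have hnotmem : T - 1 ∉ VV := Nat.notMem_of_lt_sInf (by omega)
      rw [hVV, Set.mem_setOf_eq, not_and, not_not] at hnotmem
      have := hnotmem (by omega)
      rwa [show T - 1 - 1 = T - 2 by omega] at this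
    have ht0 : ∀ γ ∈ G, (γ.sum fun _ e => e) < T := by
      intro γ hγ
      exact lt_of_le_of_lt (Finset.le_sup (f := fun a => a.sum fun _ e => e) hγ) hcon
    exact hTne (le_antisymm (VV_key hI hJ hT2 ht0 hprev) (step3 T hT1))
  · -- bound by Artin-Rees number
    set AR : Set ℕ := {k : ℕ | ∀ t ≥ k, J ⊓ I ^ t = (J ⊓ I ^ k) * I ^ (t - k)} with hAR
    obtain ⟨k, hk⟩ := Ideal.exists_pow_inf_eq_pow_smul I (J : Submodule _ (MvPolynomial (Fin n) K))
    have hkmem : k ∈ AR := by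
      intro t ht
      have h := hk t ht
      simp only [Ideal.smul_eq_mul, Ideal.mul_top] at h
      rw [inf_comm (a := J), h, inf_comm (a := I ^ k), mul_comm]
    set A := sInf AR with hA
    have hAmem : A ∈ AR := Nat.sInf_mem ⟨k, hkmem⟩
    rcases le_or_gt T A with h | hlt
    · exact h
    · exfalso
      have eq1 := hAmem T (by omega)
      rcases Nat.eq_zero_or_pos A with h0 | hpos
      · rw [h0, pow_zero, Ideal.one_eq_top, inf_top_eq, Nat.sub_zero] at eq1
        refine hTne (le_antisymm ?_ (step3 T hT1))
        rw [eq1]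
        exact Ideal.mul_mono_right (Ideal.pow_le_pow_right (by omega))
      · have hnotmem : A ∉ VV := Nat.notMem_of_lt_sInf hlt
        rw [hVV, Set.mem_setOf_eq, not_and, not_not] at hnotmem
        have eqA := hnotmem hpos
        rw [eqA, mul_assoc, ← pow_add, show A - 1 + (T - A) = T - 1 by omega] at eq1
        exact hTne eq1
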